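/- Let T be an ABC-tile with 1 ≤ A < B < C, B < 2A − 1, and C < A + B − 2. Then the three lattice points t₁ = (A+B−2, A+1, 1), t₂ = (B−2A+1, A−2, 1), and t₃ = (−2B+A+1, 1−2A, −2) are all neighbors of T, i.e. T ∩ (T + tᵢ) ≠ ∅ for i = 1, 2, 3. -/

import Mathlib

open MeasureTheory

noncomputable def Mmat (A B C : ℤ) : Matrix (Fin 3) (Fin 3) ℝ :=
  !![0, 0, -(C : ℝ); 1, 0, -(B : ℝ); 0, 1, -(A : ℝ)]

def Ddig (C : ℤ) : Set (Fin 3 → ℝ) :=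
  {d | ∃ i : ℤ, 0 ≤ i ∧ i < C ∧ d = ![(i : ℝ), 0, 0]}

def toR (α : Fin 3 → ℤ) : Fin 3 → ℝ := fun i => (α i : ℝ)

def tileTranslate (v : Fin 3 → ℝ) (T : Set (Fin 3 → ℝ)) : Set (Fin 3 → ℝ) :=
  (fun x => x + v) '' T

def IsABCTile (A B C : ℤ) (T : Set (Fin 3 → ℝ)) : Prop :=
  1 ≤ A ∧ A ≤ B ∧ B < C ∧
  T.Nonempty ∧ IsCompact T ∧ 0 < volume T ∧
  (Mmat A B C).mulVec '' T = ⋃ d ∈ Ddig C, tileTranslate d T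

def Neighbors (T : Set (Fin 3 → ℝ)) : Set (Fin 3 → ℤ) :=
  {α | α ≠ 0 ∧ (T ∩ tileTranslate (toR α) T).Nonempty}

/-! ### Auxiliary material -/

open Filter Topology

/-- Explicit inverse of `Mmat`. -/
noncomputable def Nmat (A B C : ℤ) : Matrix (Fin 3) (Fin 3) ℝ :=
  !![-((B:ℝ)/C), 1, 0; -((A:ℝ)/C), 0, 1; -(1/(C:ℝ)), 0, 0]

private lemma absIntAux (r : ℝ) (hr : 0 ≤ r) : ‖((r:ℂ))‖ = r := by
  rw [Complex.norm_real, Real.norm_of_nonneg hr]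

/-- Any root of `C z³ + B z² + A z + 1` lies strictly inside the unit circle. -/
lemma rootSmall (A B C : ℤ) (h1 : 1 ≤ A) (hAB : A < B) (hBC : B < C) (z : ℂ)
    (hz : (C:ℂ) * z^3 + (B:ℂ) * z^2 + (A:ℂ) * z + 1 = 0) : ‖z‖ < 1 := by
  by_contra hge
  push_neg at hge
  set a := ‖z‖ with ha
  have h4 : (C:ℂ) * z^4 = ((C:ℂ)-B)*z^3 + ((B:ℂ)-A)*z^2 + ((A:ℂ)-1)*z + 1 := by
    linear_combination (z - 1) * hz
  have hC0 : (0:ℝ) < (C:ℝ) := by exact_mod_cast (by omega : (0:ℤ) < C)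
  have hCB : (0:ℝ) ≤ (C:ℝ) - (B:ℝ) := by
    have h := (by omega : (0:ℤ) ≤ C - B)
    exact_mod_cast h
  have hBA : (1:ℝ) ≤ (B:ℝ) - (A:ℝ) := by
    have h := (by omega : (1:ℤ) ≤ B - A)
    exact_mod_cast h
  have hA1 : (0:ℝ) ≤ (A:ℝ) - 1 := by
    have h := (by omega : (0:ℤ) ≤ A - 1)
    exact_mod_cast h
  have ha0 : 0 < a := lt_of_lt_of_le one_pos hge
  have ecC : ((C:ℂ) - B) = ((((C:ℝ) - B):ℝ) : ℂ) := by push_cast; ring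
  have ecB : ((B:ℂ) - A) = ((((B:ℝ) - A):ℝ) : ℂ) := by push_cast; ring
  have ecA : ((A:ℂ) - 1) = ((((A:ℝ) - 1):ℝ) : ℂ) := by push_cast; ring
  have habs : (C:ℝ) * a^4 ≤ ((C:ℝ)-B)*a^3 + ((B:ℝ)-A)*a^2 + ((A:ℝ)-1)*a + 1 := by
    have e1 : ‖((C:ℂ) * z^4)‖ = (C:ℝ) * a^4 := by
      rw [norm_mul, norm_pow, show ((C:ℤ):ℂ) = (((C:ℤ):ℝ):ℂ) by push_cast; ring,
        absIntAux _ hC0.le]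
    calc (C:ℝ) * a^4 = ‖((C:ℂ) * z^4)‖ := e1.symm
      _ = ‖(((C:ℂ)-B)*z^3 + ((B:ℂ)-A)*z^2 + (((A:ℂ)-1)*z + 1))‖ := by
          rw [h4]; ring_nf
      _ ≤ ‖(((C:ℂ)-B)*z^3)‖ + ‖(((B:ℂ)-A)*z^2)‖
            + (‖(((A:ℂ)-1)*z)‖ + ‖(1:ℂ)‖) := by
          refine le_trans (norm_add_le _ _) ?_
          gcongr
          · exact norm_add_le _ _
          · exact norm_add_le _ _
      _ ≤ ((C:ℝ)-B)*a^3 + ((B:ℝ)-A)*a^2 + (((A:ℝ)-1)*a + 1) := by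
          simp only [norm_mul, norm_pow, norm_one]
          rw [ecC, ecB, ecA, absIntAux _ hCB, absIntAux _ (by linarith), absIntAux _ hA1]
      _ = ((C:ℝ)-B)*a^3 + ((B:ℝ)-A)*a^2 + ((A:ℝ)-1)*a + 1 := by ring
  have ha1 : a = 1 := by
    by_contra hne
    have hgt : 1 < a := lt_of_le_of_ne hge (Ne.symm hne)
    have e2 : a^2 ≤ a^3 := by nlinarith
    have e3 : a ≤ a^3 := by nlinarith
    have e4 : (1:ℝ) ≤ a^3 := by nlinarith
    have hub : ((C:ℝ)-B)*a^3 + ((B:ℝ)-A)*a^2 + ((A:ℝ)-1)*a + 1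
        ≤ ((C:ℝ)-B)*a^3 + ((B:ℝ)-A)*a^3 + ((A:ℝ)-1)*a^3 + a^3 := by
      gcongr <;> linarith
    have hCa : (C:ℝ)*a^4 ≤ (C:ℝ)*a^3 := by
      calc (C:ℝ)*a^4 ≤ ((C:ℝ)-B)*a^3 + ((B:ℝ)-A)*a^3 + ((A:ℝ)-1)*a^3 + a^3 :=
            le_trans habs hub
        _ = (C:ℝ)*a^3 := by ring
    nlinarith [mul_pos (mul_pos hC0 (pow_pos ha0 3)) (sub_pos.2 hgt)]
  have hzc : z * (starRingEnd ℂ) z = 1 := by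
    rw [Complex.mul_conj]
    norm_cast
    rw [Complex.normSq_eq_norm_sq, ← ha, ha1]; norm_num
  set c := (starRingEnd ℂ) z with hc
  have heq : (C:ℂ) = ((C:ℂ)-B)*c + ((B:ℂ)-A)*c^2 + ((A:ℂ)-1)*c^3 + c^4 := by
    linear_combination c^4 * h4 +
      ((-(C:ℂ))*((z*c)^3 + (z*c)^2 + (z*c) + 1) + ((C:ℂ)-B)*c*((z*c)^2+(z*c)+1)
        + ((B:ℂ)-A)*c^2*((z*c)+1) + ((A:ℂ)-1)*c^3) * hzc
  have habs1 : ∀ n : ℕ, ‖(c^n)‖ = 1 := by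
    intro n; rw [norm_pow, hc, Complex.norm_conj, ← ha, ha1, one_pow]
  have hrele : ∀ n : ℕ, (c^n).re ≤ 1 := fun n =>
    le_trans (Complex.re_le_norm _) (le_of_eq (habs1 n))
  have hre := congrArg Complex.re heq
  simp only [Complex.add_re, Complex.mul_re, Complex.sub_re, Complex.sub_im,
    Complex.intCast_re, Complex.intCast_im, Complex.one_re, Complex.one_im,
    sub_zero, zero_sub, zero_mul, mul_zero, neg_zero, add_zero] at hre
  have hc2 : (c^2).re = 1 := by
    have h1le := hrele 1
    have h2le := hrele 2
    have h3le := hrele 3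
    have h4le := hrele 4
    rw [pow_one] at h1le
    nlinarith
  have hc2eq : c^2 = 1 := by
    have habs2 : ‖(c^2)‖ = 1 := habs1 2
    have hns : Complex.normSq (c^2) = 1 := by
      rw [Complex.normSq_eq_norm_sq, habs2]; norm_num
    rw [Complex.normSq_apply, hc2] at hns
    have him : (c^2).im = 0 := by nlinarith
    apply Complex.ext <;> simp [hc2, him]
  have hz2 : z^2 = 1 := by
    have h := congrArg (starRingEnd ℂ) hc2eq
    simpa [hc, ← map_pow] using h
  have hcase : z = 1 ∨ z = -1 := by
    have hfac : (z - 1) * (z + 1) = 0 := by linear_combination hz2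
    rcases mul_eq_zero.mp hfac with h | h
    · left; exact sub_eq_zero.mp h
    · right; exact eq_neg_of_add_eq_zero_left h
  rcases hcase with h | h
  · rw [h] at hz
    have h' : ((C + B + A + 1 : ℤ):ℂ) = 0 := by push_cast; linear_combination hz
    have h'' : C + B + A + 1 = 0 := by exact_mod_cast h'
    omega
  · rw [h] at hz
    have h' : ((-C + B - A + 1 : ℤ):ℂ) = 0 := by push_cast; linear_combination hz
    have h'' : -C + B - A + 1 = 0 := by exact_mod_cast h'
    omega

/-- Any element of the spectrum of (the complexification of) `Nmat` is a root of
`C z³ + B z² + A z + 1`. -/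
lemma specRoot (A B C : ℤ) (h1 : 1 ≤ A) (hAB : A < B) (hBC : B < C)
    (z : ℂ) (hz : z ∈ spectrum ℂ ((Nmat A B C).map (Complex.ofRealHom))) :
    (C:ℂ) * z^3 + (B:ℂ) * z^2 + (A:ℂ) * z + 1 = 0 := by
  have hC0 : ((C:ℂ)) ≠ 0 := by
    have h : (0:ℤ) < C := by omega
    simpa using (by exact_mod_cast h.ne' : ((C:ℤ):ℂ) ≠ 0)
  rw [spectrum.mem_iff] at hz
  have hdet : Matrix.det (algebraMap ℂ (Matrix (Fin 3) (Fin 3) ℂ) z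
      - (Nmat A B C).map Complex.ofRealHom) = 0 := by
    by_contra hd
    exact hz ((Matrix.isUnit_iff_isUnit_det _).mpr (isUnit_iff_ne_zero.mpr hd))
  rw [Matrix.algebraMap_eq_diagonal, Matrix.det_fin_three] at hdet
  simp [Nmat, Matrix.diagonal_apply, Matrix.map_apply, Matrix.sub_apply,
    Matrix.vecHead, Matrix.vecTail] at hdet
  field_simp at hdet
  linear_combination hdet

section analytic
attribute [local instance] Matrix.linftyOpSemiNormedRing Matrix.linftyOpNormedRing
  Matrix.linftyOpNormedAlgebra

lemma normPowTendsto (A B C : ℤ) (h1 : 1 ≤ A) (hAB : A < B) (hBC : B < C) :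
    Tendsto (fun n : ℕ => ‖((Nmat A B C).map (Complex.ofRealHom)) ^ n‖) atTop (𝓝 0) := by
  set N := (Nmat A B C).map (Complex.ofRealHom) with hN
  have h : ∀ z ∈ spectrum ℂ N, ‖z‖₊ < 1 := by
    intro z hzmem
    have hlt := rootSmall A B C h1 hAB hBC z (specRoot A B C h1 hAB hBC z hzmem)
    rw [← NNReal.coe_lt_coe]
    simpa [coe_nnnorm] using hlt
  have hρ : spectralRadius ℂ N < 1 := by
    simpa using spectrum.spectralRadius_lt_of_forall_lt N h
  obtain ⟨r, hr1, hr2⟩ := exists_between hρ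
  have hrtop : r ≠ ⊤ := (hr2.trans_le le_top).ne
  lift r to NNReal using hrtop with r'
  have hr'1 : r' < 1 := by exact_mod_cast hr2
  have hgel := spectrum.pow_nnnorm_pow_one_div_tendsto_nhds_spectralRadius N
  have hev : ∀ᶠ n : ℕ in atTop, (‖N ^ n‖₊ : ENNReal) ^ (1 / (n:ℝ)) < (r' : ENNReal) :=
    hgel.eventually_lt_const hr1
  rw [Filter.eventually_atTop] at hev
  obtain ⟨n₀, hn₀⟩ := hev
  have key : ∀ n, n₀ + 1 ≤ n → ‖N ^ n‖ ≤ (r' : ℝ) ^ n := by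
    intro n hn
    have hpos : 0 < n := lt_of_lt_of_le (Nat.succ_pos _) hn
    have hnn : (0:ℝ) < (n:ℝ) := by exact_mod_cast hpos
    have h1' := (hn₀ n (le_of_lt (lt_of_lt_of_le (Nat.lt_succ_self _) hn))).le
    have h2 : ((‖N ^ n‖₊ : ENNReal) ^ (1 / (n:ℝ))) ^ (n:ℝ) ≤ (r' : ENNReal) ^ (n:ℝ) :=
      ENNReal.rpow_le_rpow h1' hnn.le
    rw [← ENNReal.rpow_mul, one_div, inv_mul_cancel₀ hnn.ne', ENNReal.rpow_one,
      ← ENNReal.coe_rpow_of_nonneg _ hnn.le, NNReal.rpow_natCast, ENNReal.coe_le_coe] at h2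
    calc ‖N ^ n‖ = ((‖N ^ n‖₊ : ℝ)) := rfl
      _ ≤ ((r' ^ n : NNReal) : ℝ) := by exact_mod_cast h2
      _ = (r' : ℝ) ^ n := by push_cast; ring
  have hpow : Tendsto (fun n : ℕ => (r':ℝ) ^ n) atTop (𝓝 0) :=
    tendsto_pow_atTop_nhds_zero_of_lt_one r'.coe_nonneg hr'1
  refine squeeze_zero' (Filter.Eventually.of_forall fun n => norm_nonneg _) ?_ hpow
  exact Filter.eventually_atTop.2 ⟨n₀ + 1, key⟩

lemma vecTendsto (A B C : ℤ) (h1 : 1 ≤ A) (hAB : A < B) (hBC : B < C) (w : Fin 3 → ℝ) :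
    Tendsto (fun n : ℕ => ((Nmat A B C) ^ n).mulVec w) atTop (𝓝 0) := by
  set N := Nmat A B C with hNdef
  set Nc := N.map (Complex.ofRealHom) with hNc
  have hmap : ∀ n : ℕ, Nc ^ n = (N ^ n).map (Complex.ofRealHom) := by
    intro n
    rw [hNc, ← RingHom.mapMatrix_apply, ← RingHom.mapMatrix_apply, ← map_pow]
  have hco : ∀ (n : ℕ) (i : Fin 3),
      |((N ^ n).mulVec w) i| ≤ ‖Nc ^ n‖ * ‖(Complex.ofRealHom ∘ w)‖ := by
    intro n i
    have hmv : (Nc ^ n).mulVec ((Complex.ofRealHom ∘ w))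
        = fun i => ((((N ^ n).mulVec w) i : ℝ) : ℂ) := by
      rw [hmap]
      funext j
      exact (RingHom.map_mulVec (Complex.ofRealHom) (N ^ n) w j).symm
    calc |((N ^ n).mulVec w) i|
        = ‖(((((N ^ n).mulVec w) i : ℝ)) : ℂ)‖ := by
          rw [Complex.norm_real, Real.norm_eq_abs]
      _ = ‖((Nc ^ n).mulVec ((Complex.ofRealHom ∘ w))) i‖ := by rw [hmv]
      _ ≤ ‖(Nc ^ n).mulVec ((Complex.ofRealHom ∘ w))‖ := norm_le_pi_norm _ i
      _ ≤ ‖Nc ^ n‖ * ‖(Complex.ofRealHom ∘ w)‖ := Matrix.linfty_opNorm_mulVec _ _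
  rw [tendsto_pi_nhds]
  intro i
  rw [show (0 : Fin 3 → ℝ) i = 0 from rfl]
  have hb := (normPowTendsto A B C h1 hAB hBC).mul_const ‖(Complex.ofRealHom ∘ w)‖
  rw [zero_mul] at hb
  refine squeeze_zero_norm (fun n => ?_) hb
  simpa [Real.norm_eq_abs] using hco n i
end analytic

section tile
variable {A B C : ℤ} {T : Set (Fin 3 → ℝ)}

lemma NM_eq_one (hC : 0 < C) : Nmat A B C * Mmat A B C = 1 := by
  have hC0 : (C:ℝ) ≠ 0 := by exact_mod_cast hC.ne'
  ext i j
  fin_cases i <;> fin_cases j <;>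
    simp [Nmat, Mmat, Matrix.mul_apply, Fin.sum_univ_three, Matrix.one_apply] <;>
    field_simp <;> ring

lemma NpowMpow (hC : 0 < C) : ∀ n : ℕ, (Nmat A B C) ^ n * (Mmat A B C) ^ n = 1 := by
  intro n
  induction n with
  | zero => simp
  | succ n ih =>
    rw [pow_succ, pow_succ']
    calc (Nmat A B C) ^ n * Nmat A B C * (Mmat A B C * (Mmat A B C) ^ n)
        = (Nmat A B C) ^ n * (Nmat A B C * Mmat A B C) * (Mmat A B C) ^ n := by
          noncomm_ring
      _ = 1 := by rw [NM_eq_one hC, mul_one, ih]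

lemma stepT (hT : IsABCTile A B C T) {x : Fin 3 → ℝ} (hx : x ∈ T) {k : ℤ}
    (hk0 : 0 ≤ k) (hkC : k < C) :
    ∃ x' ∈ T, (Mmat A B C).mulVec x' = x + ![(k:ℝ), 0, 0] := by
  obtain ⟨-, -, -, -, -, -, hset⟩ := hT
  have hmem : x + ![(k:ℝ), 0, 0] ∈ ⋃ d ∈ Ddig C, tileTranslate d T := by
    refine Set.mem_biUnion ⟨k, hk0, hkC, rfl⟩ ⟨x, hx, rfl⟩
  rw [← hset] at hmem
  obtain ⟨x', hx', hx'eq⟩ := hmem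
  exact ⟨x', hx', hx'eq⟩

lemma stepDiff (hT : IsABCTile A B C T) {x y : Fin 3 → ℝ} (hx : x ∈ T) (hy : y ∈ T)
    (k : ℤ) (hk1 : -(C-1) ≤ k) (hk2 : k ≤ C - 1) :
    ∃ x' ∈ T, ∃ y' ∈ T,
      (Mmat A B C).mulVec (x' - y') = (x - y) + toR ![k, 0, 0] := by
  have hC : 0 < C := by omega
  obtain ⟨x', hx', hxe⟩ := stepT hT hx (k := max k 0) (le_max_right _ _) (by omega)
  obtain ⟨y', hy', hye⟩ := stepT hT hy (k := max (-k) 0) (le_max_right _ _) (by omega)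
  refine ⟨x', hx', y', hy', ?_⟩
  rw [Matrix.mulVec_sub, hxe, hye]
  have hr : ((k ⊔ 0 : ℤ):ℝ) - ((-k ⊔ 0 : ℤ):ℝ) = (k:ℝ) := by
    have h : (k ⊔ 0) - (-k ⊔ 0) = k := by omega
    exact_mod_cast h
  push_cast at hr
  funext i
  simp only [Pi.sub_apply, Pi.add_apply]
  fin_cases i <;>
    simp [toR, Matrix.cons_val_zero, Matrix.cons_val_one, Matrix.head_cons] <;>
    linarith [hr]

lemma exactStep (hT : IsABCTile A B C T) {x y s t : Fin 3 → ℝ}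
    (hx : x ∈ T) (hy : y ∈ T) (hxy : x - y = s) {k : ℤ}
    (hk1 : -(C-1) ≤ k) (hk2 : k ≤ C - 1)
    (hrel : (Mmat A B C).mulVec t = s + toR ![k, 0, 0]) :
    ∃ x' ∈ T, ∃ y' ∈ T, x' - y' = t := by
  have hC : 0 < C := by
    obtain ⟨h1, h2, h3, -⟩ := hT; omega
  obtain ⟨x', hx', y', hy', he⟩ := stepDiff hT hx hy k hk1 hk2
  have heq : (Mmat A B C).mulVec (x' - y') = (Mmat A B C).mulVec t := by
    rw [he, hxy, hrel]
  have hfin := congrArg ((Nmat A B C).mulVec) heq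
  rw [Matrix.mulVec_mulVec, Matrix.mulVec_mulVec, NM_eq_one hC,
    Matrix.one_mulVec, Matrix.one_mulVec] at hfin
  exact ⟨x', hx', y', hy', hfin⟩

lemma rel1 : (Mmat A B C).mulVec (toR ![-2*B+A+1, 1-2*A, -2])
    = toR ![A+B-2, A+1, 1] + toR ![2*C-A-B+2, 0, 0] := by
  funext i
  fin_cases i <;>
    simp [Mmat, toR, Matrix.mulVec, dotProduct, Fin.sum_univ_three] <;>
    push_cast <;> ring

lemma rel2 : (Mmat A B C).mulVec (toR ![B-2*A+1, A-2, 1])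
    = toR ![-2*B+A+1, 1-2*A, -2] + toR ![2*B-A-C-1, 0, 0] := by
  funext i
  fin_cases i <;>
    simp [Mmat, toR, Matrix.mulVec, dotProduct, Fin.sum_univ_three] <;>
    push_cast <;> ring

lemma rel3 : (Mmat A B C).mulVec (toR ![A+B-2, A+1, 1])
    = toR ![B-2*A+1, A-2, 1] + toR ![2*A-B-C-1, 0, 0] := by
  funext i
  fin_cases i <;>
    simp [Mmat, toR, Matrix.mulVec, dotProduct, Fin.sum_univ_three] <;>
    push_cast <;> ring

lemma approx (hT : IsABCTile A B C T)
    (hAB : A < B) (hB : B < 2 * A - 1) (hC : C < A + B - 2) :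
    ∀ n : ℕ, ∃ x ∈ T, ∃ y ∈ T,
      ((Mmat A B C)^(3*n)).mulVec (x - y - toR ![A+B-2, A+1, 1])
        = -(toR ![A+B-2, A+1, 1]) := by
  have hT' := hT
  obtain ⟨h1, hABle, hBC, ⟨t0, ht0⟩, -, -, -⟩ := hT'
  intro n
  induction n with
  | zero =>
    refine ⟨t0, ht0, t0, ht0, ?_⟩
    rw [Nat.mul_zero, pow_zero, Matrix.one_mulVec]
    abel
  | succ n ih =>
    obtain ⟨x, hx, y, hy, hrel⟩ := ih
    obtain ⟨x₁, hx₁, y₁, hy₁, he1⟩ :=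
      stepDiff hT hx hy (2*C-A-B+2) (by omega) (by omega)
    obtain ⟨x₂, hx₂, y₂, hy₂, he2⟩ :=
      stepDiff hT hx₁ hy₁ (2*B-A-C-1) (by omega) (by omega)
    obtain ⟨x₃, hx₃, y₃, hy₃, he3⟩ :=
      stepDiff hT hx₂ hy₂ (2*A-B-C-1) (by omega) (by omega)
    refine ⟨x₃, hx₃, y₃, hy₃, ?_⟩
    have f1 : (Mmat A B C).mulVec (x₁ - y₁ - toR ![-2*B+A+1, 1-2*A, -2])
        = (x - y) - toR ![A+B-2, A+1, 1] := by
      rw [Matrix.mulVec_sub, he1, rel1]; abel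
    have f2 : (Mmat A B C).mulVec (x₂ - y₂ - toR ![B-2*A+1, A-2, 1])
        = (x₁ - y₁) - toR ![-2*B+A+1, 1-2*A, -2] := by
      rw [Matrix.mulVec_sub, he2, rel2]; abel
    have f3 : (Mmat A B C).mulVec (x₃ - y₃ - toR ![A+B-2, A+1, 1])
        = (x₂ - y₂) - toR ![B-2*A+1, A-2, 1] := by
      rw [Matrix.mulVec_sub, he3, rel3]; abel
    have h3 : ((Mmat A B C)^3).mulVec (x₃ - y₃ - toR ![A+B-2, A+1, 1])
        = x - y - toR ![A+B-2, A+1, 1] := by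
      rw [pow_three, ← Matrix.mulVec_mulVec, ← Matrix.mulVec_mulVec, f3, f2, f1]
    calc ((Mmat A B C)^(3*(n+1))).mulVec (x₃ - y₃ - toR ![A+B-2, A+1, 1])
        = ((Mmat A B C)^(3*n) * (Mmat A B C)^3).mulVec
            (x₃ - y₃ - toR ![A+B-2, A+1, 1]) := by
          rw [← pow_add, Nat.mul_succ]
      _ = ((Mmat A B C)^(3*n)).mulVec
            (((Mmat A B C)^3).mulVec (x₃ - y₃ - toR ![A+B-2, A+1, 1])) :=
          (Matrix.mulVec_mulVec _ _ _).symm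
      _ = -(toR ![A+B-2, A+1, 1]) := by rw [h3, hrel]

end tile

theorem stmt11 (A B C : ℤ) (T : Set (Fin 3 → ℝ)) (hT : IsABCTile A B C T)
    (hAB : A < B) (hB : B < 2 * A - 1) (hC : C < A + B - 2) :
    (T ∩ tileTranslate (toR ![A + B - 2, A + 1, 1]) T).Nonempty ∧
    (T ∩ tileTranslate (toR ![B - 2 * A + 1, A - 2, 1]) T).Nonempty ∧
    (T ∩ tileTranslate (toR ![-2 * B + A + 1, 1 - 2 * A, -2]) T).Nonempty := by
  have hTile := hT
  obtain ⟨h1, hABle, hBC, hne, hcomp, -, -⟩ := hT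
  have hCpos : 0 < C := by omega
  choose x hx y hy hrel using approx hTile hAB hB hC
  -- express differences via the inverse matrix
  have hconv : ∀ n, x n - y n - toR ![A+B-2, A+1, 1]
      = ((Nmat A B C)^(3*n)).mulVec (-(toR ![A+B-2, A+1, 1])) := by
    intro n
    have h2 : ((Nmat A B C)^(3*n)).mulVec
        (((Mmat A B C)^(3*n)).mulVec (x n - y n - toR ![A+B-2, A+1, 1]))
        = x n - y n - toR ![A+B-2, A+1, 1] := by
      rw [Matrix.mulVec_mulVec, NpowMpow hCpos, Matrix.one_mulVec]
    rw [hrel n] at h2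
    exact h2.symm
  -- extract convergent subsequences
  obtain ⟨a, ha, φ, hφ, hxa⟩ := hcomp.tendsto_subseq hx
  obtain ⟨b, hb, ψ, hψ, hyb⟩ := hcomp.tendsto_subseq (fun n => hy (φ n))
  set σ : ℕ → ℕ := φ ∘ ψ with hσdef
  have hσmono : StrictMono σ := hφ.comp hψ
  have hxa2 : Tendsto (fun n => x (σ n)) atTop (𝓝 a) := hxa.comp hψ.tendsto_atTop
  have hyb2 : Tendsto (fun n => y (σ n)) atTop (𝓝 b) := hyb
  have h3σ : Tendsto (fun n => 3 * σ n) atTop atTop :=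
    tendsto_atTop_mono (fun n => Nat.le_mul_of_pos_left (σ n) (by norm_num))
      hσmono.tendsto_atTop
  have hg : Tendsto (fun n => ((Nmat A B C)^(3 * σ n)).mulVec
      (-(toR ![A+B-2, A+1, 1]))) atTop (𝓝 0) :=
    (vecTendsto A B C h1 hAB hBC (-(toR ![A+B-2, A+1, 1]))).comp h3σ
  have hdiff : Tendsto (fun n => x (σ n) - y (σ n) - toR ![A+B-2, A+1, 1]) atTop
      (𝓝 (a - b - toR ![A+B-2, A+1, 1])) :=
    (hxa2.sub hyb2).sub tendsto_const_nhds
  have hfun : (fun n => x (σ n) - y (σ n) - toR ![A+B-2, A+1, 1])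
      = fun n => ((Nmat A B C)^(3 * σ n)).mulVec (-(toR ![A+B-2, A+1, 1])) :=
    funext fun n => hconv (σ n)
  rw [hfun] at hdiff
  have heq0 : a - b - toR ![A+B-2, A+1, 1] = 0 := tendsto_nhds_unique hdiff hg
  have hab : a - b = toR ![A+B-2, A+1, 1] := sub_eq_zero.mp heq0
  -- exact pair for t₁
  have mem1 : (T ∩ tileTranslate (toR ![A + B - 2, A + 1, 1]) T).Nonempty :=
    ⟨a, ha, b, hb, show b + _ = a by rw [← hab, add_sub_cancel]⟩
  -- exact pair for t₃
  obtain ⟨x₃, hx₃, y₃, hy₃, hxy3⟩ :=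
    exactStep hTile ha hb hab (k := 2*C-A-B+2) (by omega) (by omega) rel1
  have mem3 : (T ∩ tileTranslate (toR ![-2 * B + A + 1, 1 - 2 * A, -2]) T).Nonempty :=
    ⟨x₃, hx₃, y₃, hy₃, show y₃ + _ = x₃ by rw [← hxy3, add_sub_cancel]⟩
  -- exact pair for t₂
  obtain ⟨x₂, hx₂, y₂, hy₂, hxy2⟩ :=
    exactStep hTile hx₃ hy₃ hxy3 (k := 2*B-A-C-1) (by omega) (by omega) rel2
  have mem2 : (T ∩ tileTranslate (toR ![B - 2 * A + 1, A - 2, 1]) T).Nonempty :=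
    ⟨x₂, hx₂, y₂, hy₂, show y₂ + _ = x₂ by rw [← hxy2, add_sub_cancel]⟩
  exact ⟨mem1, mem2, mem3⟩
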